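/- Let m = 8n for some n ≥ 1. Let Δ_0 = {1, …, 4n} and Δ_1 = {4n+1, …, 8n}, and let Γ = Alt(Δ_0) × Alt(Δ_1) be the subgroup of Alt(m) consisting of the even permutations preserving Δ_0 and Δ_1 and even on each of them. Let θ be any involution of {1, …, 8n} which maps Δ_0 onto the set of even numbers in {1, …, 8n} and Δ_1 onto the set of odd numbers in {1, …, 8n}. Then every φ ∈ Alt(m) can be expressed as a product φ = ψ_1 θ ψ_2 θ ψ_3 θ ψ_4 θ ψ_5 θ ψ_6 θ ψ_7 θ ψ_8 θ ψ_9 for some ψ_1, …, ψ_9 ∈ Γ. -/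

import Mathlib

open Equiv Finset

variable {α : Type*} [Fintype α] [DecidableEq α]

/-- There is a permutation carrying `S` exactly onto `T` once `S.card = T.card`. -/
lemma exists_perm_maps (S T : Finset α) (h : S.card = T.card) :
    ∃ π : Equiv.Perm α, ∀ x, π x ∈ T ↔ x ∈ S := by
  classical
  have e1 : {a // a ∈ S} ≃ {a // a ∈ T} := by
    apply Fintype.equivOfCardEq; simpa using h
  have e2 : {a // ¬ a ∈ S} ≃ {a // ¬ a ∈ T} := by
    apply Fintype.equivOfCardEq
    simp only [Fintype.card_subtype_compl, Fintype.card_coe, h]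
  refine ⟨(Equiv.sumCompl (· ∈ S)).symm.trans
      ((e1.sumCongr e2).trans (Equiv.sumCompl (· ∈ T))), fun x => ?_⟩
  by_cases hx : x ∈ S
  · simp only [Equiv.trans_apply, Equiv.sumCompl_symm_apply_of_pos hx,
      Equiv.sumCongr_apply, Sum.map_inl, Equiv.sumCompl_apply_inl]
    exact iff_of_true (e1 ⟨x, hx⟩).2 hx
  · simp only [Equiv.trans_apply, Equiv.sumCompl_symm_apply_of_neg hx,
      Equiv.sumCongr_apply, Sum.map_inr, Equiv.sumCompl_apply_inr]
    exact iff_of_false (e2 ⟨x, hx⟩).2 hx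

/-- A permutation fixing everything outside `p` preserves `p`. -/
lemma supp_preserves {π : Equiv.Perm α} {p : α → Prop}
    (hπ : ∀ x, ¬ p x → π x = x) : ∀ x, p (π x) ↔ p x := by
  intro x
  constructor
  · intro hpx
    by_contra hx
    rw [hπ x hx] at hpx; exact hx hpx
  · intro hx
    by_contra hπx
    have := hπ (π x) hπx
    have := π.injective this
    rw [← this] at hx
    exact hπx hx

/-- Step B: a permutation supported on `p` carrying `S` onto `T`. -/
lemma exists_perm_supported (p : α → Prop) [DecidablePred p] (S T : Finset α)
    (hS : ∀ x ∈ S, p x) (hT : ∀ x ∈ T, p x) (h : S.card = T.card) :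
    ∃ π : Equiv.Perm α, (∀ x, ¬ p x → π x = x) ∧ (∀ x, π x ∈ T ↔ x ∈ S) := by
  classical
  have hcard : (S.subtype p).card = (T.subtype p).card := by
    rw [Finset.card_subtype, Finset.card_subtype, Finset.filter_true_of_mem hS,
      Finset.filter_true_of_mem hT, h]
  obtain ⟨π', hπ'⟩ := exists_perm_maps (S.subtype p) (T.subtype p) hcard
  refine ⟨Equiv.Perm.ofSubtype π', fun x hx => Equiv.Perm.ofSubtype_apply_of_not_mem π' hx,
    fun x => ?_⟩
  by_cases hx : p x
  · rw [Equiv.Perm.ofSubtype_apply_of_mem π' hx]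
    have := hπ' ⟨x, hx⟩
    simpa [Finset.mem_subtype] using this
  · rw [Equiv.Perm.ofSubtype_apply_of_not_mem π' hx]
    exact iff_of_false (fun hc => hx (hT x hc)) (fun hc => hx (hS x hc))

/-- Step C: decompose a `p`-invariant permutation into parts supported on `p` and `¬p`. -/
lemma perm_decomp (g : Equiv.Perm α) (p : α → Prop) [DecidablePred p]
    (hg : ∀ x, p (g x) ↔ p x) :
    ∃ a b : Equiv.Perm α, (∀ x, ¬ p x → a x = x) ∧ (∀ x, p x → b x = x) ∧ g = a * b := by
  classical
  have hg1 : ∀ x, p (g x) ↔ p x := hg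
  have hg2 : ∀ x, ¬ p (g x) ↔ ¬ p x := fun x => (hg1 x).not
  refine ⟨Equiv.Perm.ofSubtype (g.subtypePerm hg1), Equiv.Perm.ofSubtype (g.subtypePerm hg2),
    fun x hx => Equiv.Perm.ofSubtype_apply_of_not_mem _ hx,
    fun x hx => Equiv.Perm.ofSubtype_apply_of_not_mem _ (not_not_intro hx), ?_⟩
  ext x
  by_cases hx : p x
  · rw [Equiv.Perm.mul_apply,
      Equiv.Perm.ofSubtype_apply_of_not_mem (a := x) (g.subtypePerm hg2) (not_not_intro hx),
      Equiv.Perm.ofSubtype_apply_of_mem (g.subtypePerm hg1) hx]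
    rfl
  · rw [Equiv.Perm.mul_apply, Equiv.Perm.ofSubtype_apply_of_mem (a := x) (g.subtypePerm hg2) hx,
      Equiv.Perm.subtypePerm_apply]
    exact (Equiv.Perm.ofSubtype_apply_of_not_mem (g.subtypePerm hg1)
      (by simpa using (hg2 x).2 hx)).symm ▸ rfl

/-- Counting: a permutation moves equally many points out of `p` as into `p`. -/
lemma card_cross (g : Equiv.Perm α) (p : α → Prop) [DecidablePred p] :
    (Finset.univ.filter fun x => p x ∧ ¬ p (g x)).card =
    (Finset.univ.filter fun x => ¬ p x ∧ p (g x)).card := by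
  classical
  have key : (Finset.univ.filter fun x => p (g x)).card =
      (Finset.univ.filter fun x => p x).card := by
    apply Finset.card_bij (fun x _ => g x)
    · intro a ha; simp only [Finset.mem_filter, Finset.mem_univ, true_and] at ha ⊢; exact ha
    · intro a _ b _ hab; exact g.injective hab
    · intro b hb
      refine ⟨g⁻¹ b, ?_, by simp⟩
      simp only [Finset.mem_filter, Finset.mem_univ, true_and] at hb ⊢
      simpa using hb
  have h1 : (Finset.univ.filter fun x => p x ∧ p (g x)).card
      + (Finset.univ.filter fun x => p x ∧ ¬ p (g x)).card
      = (Finset.univ.filter fun x => p x).card := by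
    rw [← Finset.filter_filter, ← Finset.filter_filter,
      Finset.card_filter_add_card_filter_not]
  have h2 : (Finset.univ.filter fun x => p x ∧ p (g x)).card
      + (Finset.univ.filter fun x => ¬ p x ∧ p (g x)).card
      = (Finset.univ.filter fun x => p (g x)).card := by
    have e1 : (Finset.univ.filter fun x => p x ∧ p (g x))
        = (Finset.univ.filter fun x => p (g x)).filter (fun x => p x) := by
      rw [Finset.filter_filter]; apply Finset.filter_congr; intro x _; tauto
    have e2 : (Finset.univ.filter fun x => ¬ p x ∧ p (g x))
        = (Finset.univ.filter fun x => p (g x)).filter (fun x => ¬ p x) := by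
      rw [Finset.filter_filter]; apply Finset.filter_congr; intro x _; tauto
    rw [e1, e2, Finset.card_filter_add_card_filter_not]
  omega

/-- Counting: if `g` carries `S` onto `T` and `R ⊆ T` then `|S ∩ g⁻¹R| = |R|`. -/
lemma card_filter_target (g : Equiv.Perm α) (S T R : Finset α)
    (hg : ∀ x, g x ∈ T ↔ x ∈ S) (hR : R ⊆ T) :
    (S.filter fun x => g x ∈ R).card = R.card := by
  classical
  apply Finset.card_bij (fun x _ => g x)
  · intro a ha; exact (Finset.mem_filter.1 ha).2
  · intro a _ b _ hab; exact g.injective hab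
  · intro b hb
    refine ⟨g⁻¹ b, ?_, by simp⟩
    rw [Finset.mem_filter]
    have : g (g⁻¹ b) = b := by simp
    rw [this]
    exact ⟨(hg _).1 (by rw [this]; exact hR hb), hb⟩

/-- Transfer counting on `Fin m` to counting on `range m`. -/
lemma card_filter_fin (m : ℕ) (P : ℕ → Prop) [DecidablePred P] :
    ((Finset.univ : Finset (Fin m)).filter fun x => P x.val).card
      = ((Finset.range m).filter P).card := by
  have himg : ((Finset.univ : Finset (Fin m)).filter fun x => P x.val).image Fin.val
      = (Finset.range m).filter P := by
    ext b
    simp only [Finset.mem_image, Finset.mem_filter, Finset.mem_univ, true_and,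
      Finset.mem_range]
    constructor
    · rintro ⟨x, hx, rfl⟩; exact ⟨x.isLt, hx⟩
    · rintro ⟨hb, hPb⟩; exact ⟨⟨b, hb⟩, hPb, rfl⟩
  rw [← himg, Finset.card_image_of_injective _ Fin.val_injective]

lemma card_even_range (k : ℕ) :
    ((Finset.range (2 * k)).filter fun x => x % 2 = 0).card = k := by
  induction k with
  | zero => simp
  | succ k ih =>
    have : 2 * (k + 1) = (2 * k + 1) + 1 := by ring
    rw [this, Finset.range_add_one, Finset.range_add_one, Finset.filter_insert, Finset.filter_insert]
    have h1 : ¬ (2 * k + 1) % 2 = 0 := by omega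
    have h2 : (2 * k) % 2 = 0 := by omega
    rw [if_neg h1, if_pos h2, Finset.card_insert_of_notMem (by simp), ih]

lemma card_odd_range (k : ℕ) :
    ((Finset.range (2 * k)).filter fun x => x % 2 = 1).card = k := by
  induction k with
  | zero => simp
  | succ k ih =>
    have : 2 * (k + 1) = (2 * k + 1) + 1 := by ring
    rw [this, Finset.range_add_one, Finset.range_add_one, Finset.filter_insert, Finset.filter_insert]
    have h1 : (2 * k + 1) % 2 = 1 := by omega
    have h2 : ¬ (2 * k) % 2 = 1 := by omega
    rw [if_pos h1, if_neg h2, Finset.card_insert_of_notMem (by simp), ih]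

section Blocks

variable (n : ℕ)

lemma card_delta0 :
    ((Finset.univ : Finset (Fin (8 * n))).filter fun x => x.val < 4 * n).card = 4 * n := by
  rw [card_filter_fin (8 * n) (fun a => a < 4 * n)]
  have : (Finset.range (8 * n)).filter (fun a => a < 4 * n) = Finset.range (4 * n) := by
    ext a; simp only [Finset.mem_filter, Finset.mem_range]; omega
  rw [this, Finset.card_range]

lemma card_blockA :
    ((Finset.univ : Finset (Fin (8 * n))).filter
      fun x => x.val < 4 * n ∧ x.val % 2 = 0).card = 2 * n := by
  rw [card_filter_fin (8 * n) (fun a => a < 4 * n ∧ a % 2 = 0)]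
  have h1 : (Finset.range (8 * n)).filter (fun a => a < 4 * n ∧ a % 2 = 0)
      = (Finset.range (2 * (2 * n))).filter (fun a => a % 2 = 0) := by
    ext a; simp only [Finset.mem_filter, Finset.mem_range]; omega
  rw [h1, card_even_range]

lemma card_blockB :
    ((Finset.univ : Finset (Fin (8 * n))).filter
      fun x => x.val < 4 * n ∧ x.val % 2 = 1).card = 2 * n := by
  rw [card_filter_fin (8 * n) (fun a => a < 4 * n ∧ a % 2 = 1)]
  have h1 : (Finset.range (8 * n)).filter (fun a => a < 4 * n ∧ a % 2 = 1)
      = (Finset.range (2 * (2 * n))).filter (fun a => a % 2 = 1) := by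
    ext a; simp only [Finset.mem_filter, Finset.mem_range]; omega
  rw [h1, card_odd_range]

lemma card_blockC :
    ((Finset.univ : Finset (Fin (8 * n))).filter
      fun x => ¬ x.val < 4 * n ∧ x.val % 2 = 0).card = 2 * n := by
  rw [card_filter_fin (8 * n) (fun a => ¬ a < 4 * n ∧ a % 2 = 0)]
  have himg : ((Finset.range (8 * n)).filter (fun a => ¬ a < 4 * n ∧ a % 2 = 0)).image
      (fun a => a - 4 * n) = (Finset.range (2 * (2 * n))).filter (fun a => a % 2 = 0) := by
    ext b
    simp only [Finset.mem_image, Finset.mem_filter, Finset.mem_range]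
    constructor
    · rintro ⟨a, ⟨ha, hc⟩, rfl⟩; omega
    · rintro ⟨hb, he⟩; exact ⟨b + 4 * n, by omega, by omega⟩
  rw [← card_even_range (2 * n), ← himg]
  rw [Finset.card_image_of_injOn]
  intro a ha b hb hab
  simp only [Finset.coe_filter, Finset.mem_range, Set.mem_setOf_eq] at ha hb
  simp only at hab
  omega

lemma card_blockD :
    ((Finset.univ : Finset (Fin (8 * n))).filter
      fun x => ¬ x.val < 4 * n ∧ x.val % 2 = 1).card = 2 * n := by
  rw [card_filter_fin (8 * n) (fun a => ¬ a < 4 * n ∧ a % 2 = 1)]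
  have himg : ((Finset.range (8 * n)).filter (fun a => ¬ a < 4 * n ∧ a % 2 = 1)).image
      (fun a => a - 4 * n) = (Finset.range (2 * (2 * n))).filter (fun a => a % 2 = 1) := by
    ext b
    simp only [Finset.mem_image, Finset.mem_filter, Finset.mem_range]
    constructor
    · rintro ⟨a, ⟨ha, hc⟩, rfl⟩; omega
    · rintro ⟨hb, he⟩; exact ⟨b + 4 * n, by omega, by omega⟩
  rw [← card_odd_range (2 * n), ← himg]
  rw [Finset.card_image_of_injOn]
  intro a ha b hb hab
  simp only [Finset.coe_filter, Finset.mem_range, Set.mem_setOf_eq] at ha hb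
  simp only at hab
  omega

end Blocks

/-- Phase 1: rows–columns–rows decomposition (no parity constraints yet). -/
lemma phase1 (n : ℕ) (φ : Equiv.Perm (Fin (8 * n))) :
    ∃ a b cE cO e f : Equiv.Perm (Fin (8 * n)),
      (∀ x, ¬ x.val < 4 * n → a x = x) ∧ (∀ x, x.val < 4 * n → b x = x) ∧
      (∀ x, ¬ x.val % 2 = 0 → cE x = x) ∧ (∀ x, x.val % 2 = 0 → cO x = x) ∧
      (∀ x, ¬ x.val < 4 * n → e x = x) ∧ (∀ x, x.val < 4 * n → f x = x) ∧
      φ = (a * b) * (cE * cO) * (e * f) := by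
  classical
  set Φ₁ : Finset (Fin (8 * n)) :=
    Finset.univ.filter (fun x => x.val < 4 * n ∧ ¬ (φ x).val < 4 * n) with hΦ₁
  set s := Φ₁.card with hs
  have hs4 : s ≤ 4 * n := by
    rw [hs, ← card_delta0 n]
    apply Finset.card_le_card
    intro x hx
    simp only [hΦ₁, Finset.mem_filter] at hx ⊢
    exact ⟨hx.1, hx.2.1⟩
  set sE := min s (2 * n) with hsE
  set sO := s - sE with hsO
  have hsum : sE + sO = s := by omega
  have hsE2 : sE ≤ 2 * n := by omega
  have hsO2 : sO ≤ 2 * n := by omega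
  set A : Finset (Fin (8 * n)) :=
    Finset.univ.filter (fun x => x.val < 4 * n ∧ x.val % 2 = 0) with hA
  set B : Finset (Fin (8 * n)) :=
    Finset.univ.filter (fun x => x.val < 4 * n ∧ x.val % 2 = 1) with hB
  set C : Finset (Fin (8 * n)) :=
    Finset.univ.filter (fun x => ¬ x.val < 4 * n ∧ x.val % 2 = 0) with hC
  set D : Finset (Fin (8 * n)) :=
    Finset.univ.filter (fun x => ¬ x.val < 4 * n ∧ x.val % 2 = 1) with hD
  have hcardA : A.card = 2 * n := card_blockA n
  have hcardB : B.card = 2 * n := card_blockB n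
  have hcardC : C.card = 2 * n := card_blockC n
  have hcardD : D.card = 2 * n := card_blockD n
  obtain ⟨U, hUA, hcardU⟩ := Finset.exists_subset_card_eq (s := A) (n := sE) (by omega)
  obtain ⟨V, hVC, hcardV⟩ := Finset.exists_subset_card_eq (s := C) (n := sE) (by omega)
  obtain ⟨U', hUB, hcardU'⟩ := Finset.exists_subset_card_eq (s := B) (n := sO) (by omega)
  obtain ⟨V', hVD, hcardV'⟩ := Finset.exists_subset_card_eq (s := D) (n := sO) (by omega)
  -- the column permutation
  have hTE : A.card = ((A \ U) ∪ V).card := by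
    rw [Finset.card_union_of_disjoint, Finset.card_sdiff_of_subset hUA]
    · omega
    · rw [Finset.disjoint_left]
      intro x hx hx'
      have h1 := (Finset.mem_filter.1 (Finset.sdiff_subset hx : x ∈ A)).2.1
      have h2 := (Finset.mem_filter.1 (hVC hx')).2.1
      exact h2 h1
  obtain ⟨cE, hcEfix, hcEmap⟩ := exists_perm_supported (fun x => x.val % 2 = 0)
    A ((A \ U) ∪ V)
    (fun x hx => (Finset.mem_filter.1 hx).2.2)
    (fun x hx => by
      rcases Finset.mem_union.1 hx with h | h
      · exact (Finset.mem_filter.1 (Finset.sdiff_subset h)).2.2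
      · exact (Finset.mem_filter.1 (hVC h)).2.2)
    hTE
  have hTO : B.card = ((B \ U') ∪ V').card := by
    rw [Finset.card_union_of_disjoint, Finset.card_sdiff_of_subset hUB]
    · omega
    · rw [Finset.disjoint_left]
      intro x hx hx'
      have h1 := (Finset.mem_filter.1 (Finset.sdiff_subset hx : x ∈ B)).2.1
      have h2 := (Finset.mem_filter.1 (hVD hx')).2.1
      exact h2 h1
  obtain ⟨cO, hcOfix, hcOmap⟩ := exists_perm_supported (fun x => ¬ x.val % 2 = 0)
    B ((B \ U') ∪ V')
    (fun x hx => by simp [(Finset.mem_filter.1 hx).2.2])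
    (fun x hx => by
      rcases Finset.mem_union.1 hx with h | h
      · simp [(Finset.mem_filter.1 (Finset.sdiff_subset h)).2.2]
      · simp [(Finset.mem_filter.1 (hVD h)).2.2])
    hTO
  have hcOfix' : ∀ x : Fin (8 * n), x.val % 2 = 0 → cO x = x := by
    intro x hx; exact hcOfix x (not_not_intro hx)
  -- evaluation of the column permutation
  have hkeven : ∀ x : Fin (8 * n), x.val % 2 = 0 → (cE * cO) x = cE x := by
    intro x hx; rw [Equiv.Perm.mul_apply, hcOfix' x hx]
  have hcEpres : ∀ x : Fin (8 * n), ((cE x).val % 2 = 0 ↔ x.val % 2 = 0) :=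
    supp_preserves hcEfix
  have hcOpres : ∀ x : Fin (8 * n), (¬ (cO x).val % 2 = 0 ↔ ¬ x.val % 2 = 0) :=
    supp_preserves (p := fun x : Fin (8 * n) => ¬ x.val % 2 = 0)
      (fun x hx => hcOfix' x (not_not.1 hx))
  have hkodd : ∀ x : Fin (8 * n), ¬ x.val % 2 = 0 → (cE * cO) x = cO x := by
    intro x hx
    rw [Equiv.Perm.mul_apply, hcEfix _ ((hcOpres x).2 hx)]
  -- cardinality of the crossing set of the column permutation
  set K₁ : Finset (Fin (8 * n)) :=
    Finset.univ.filter (fun x => x.val < 4 * n ∧ ¬ ((cE * cO) x).val < 4 * n) with hK₁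
  have hK₁E : K₁.filter (fun x => x.val % 2 = 0) = A.filter (fun x => cE x ∈ V) := by
    ext x
    simp only [hK₁, hA, Finset.mem_filter, Finset.mem_univ, true_and]
    constructor
    · rintro ⟨⟨hx4, hkx⟩, hev⟩
      refine ⟨⟨hx4, hev⟩, ?_⟩
      have hmem : cE x ∈ (A \ U) ∪ V := (hcEmap x).2 (by
        simp only [hA, Finset.mem_filter, Finset.mem_univ, true_and]; exact ⟨hx4, hev⟩)
      rcases Finset.mem_union.1 hmem with h | h
      · exfalso
        apply hkx
        rw [hkeven x hev]
        exact (Finset.mem_filter.1 (Finset.sdiff_subset h)).2.1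
      · exact h
    · rintro ⟨⟨hx4, hev⟩, hV⟩
      refine ⟨⟨hx4, ?_⟩, hev⟩
      rw [hkeven x hev]
      exact (Finset.mem_filter.1 (hVC hV)).2.1
  have hK₁O : K₁.filter (fun x => ¬ x.val % 2 = 0) = B.filter (fun x => cO x ∈ V') := by
    ext x
    simp only [hK₁, hB, Finset.mem_filter, Finset.mem_univ, true_and]
    constructor
    · rintro ⟨⟨hx4, hkx⟩, hod⟩
      refine ⟨⟨hx4, by omega⟩, ?_⟩
      have hmem : cO x ∈ (B \ U') ∪ V' := (hcOmap x).2 (by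
        simp only [hB, Finset.mem_filter, Finset.mem_univ, true_and]
        exact ⟨hx4, by omega⟩)
      rcases Finset.mem_union.1 hmem with h | h
      · exfalso
        apply hkx
        rw [hkodd x hod]
        exact (Finset.mem_filter.1 (Finset.sdiff_subset h)).2.1
      · exact h
    · rintro ⟨⟨hx4, hod⟩, hV⟩
      have hod' : ¬ x.val % 2 = 0 := by omega
      refine ⟨⟨hx4, ?_⟩, hod'⟩
      rw [hkodd x hod']
      exact (Finset.mem_filter.1 (hVD hV)).2.1
  have hcardK₁ : K₁.card = s := by
    have hsplit := Finset.card_filter_add_card_filter_not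
      (s := K₁) (p := fun x => x.val % 2 = 0)
    rw [hK₁E, hK₁O] at hsplit
    have c1 : (A.filter (fun x => cE x ∈ V)).card = sE := by
      rw [card_filter_target cE A ((A \ U) ∪ V) V hcEmap Finset.subset_union_right, hcardV]
    have c2 : (B.filter (fun x => cO x ∈ V')).card = sO := by
      rw [card_filter_target cO B ((B \ U') ∪ V') V' hcOmap Finset.subset_union_right, hcardV']
    omega
  set K₂ : Finset (Fin (8 * n)) :=
    Finset.univ.filter (fun x => ¬ x.val < 4 * n ∧ ((cE * cO) x).val < 4 * n) with hK₂
  have hcardK₂ : K₂.card = s := by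
    rw [hK₂, ← card_cross (cE * cO) (fun x => x.val < 4 * n), ← hK₁, hcardK₁]
  set Φ₂ : Finset (Fin (8 * n)) :=
    Finset.univ.filter (fun x => ¬ x.val < 4 * n ∧ (φ x).val < 4 * n) with hΦ₂
  have hcardΦ₂ : Φ₂.card = s := by
    rw [hΦ₂, ← card_cross φ (fun x => x.val < 4 * n), ← hΦ₁, hs]
  -- the right row permutation
  obtain ⟨e, hefix, hemap⟩ := exists_perm_supported (fun x => x.val < 4 * n) Φ₁ K₁
    (fun x hx => (Finset.mem_filter.1 hx).2.1)
    (fun x hx => (Finset.mem_filter.1 hx).2.1)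
    (by rw [← hs, hcardK₁])
  obtain ⟨f, hffix, hfmap⟩ := exists_perm_supported (fun x => ¬ x.val < 4 * n) Φ₂ K₂
    (fun x hx => (Finset.mem_filter.1 hx).2.1)
    (fun x hx => (Finset.mem_filter.1 hx).2.1)
    (by rw [hcardΦ₂, hcardK₂])
  have hffix' : ∀ x : Fin (8 * n), x.val < 4 * n → f x = x := by
    intro x hx; exact hffix x (not_not_intro hx)
  have hepres : ∀ x : Fin (8 * n), ((e x).val < 4 * n ↔ x.val < 4 * n) :=
    supp_preserves hefix
  have hfpres : ∀ x : Fin (8 * n), (¬ (f x).val < 4 * n ↔ ¬ x.val < 4 * n) :=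
    supp_preserves (p := fun x : Fin (8 * n) => ¬ x.val < 4 * n)
      (fun x hx => hffix' x (not_not.1 hx))
  -- the key pointwise claim
  have key : ∀ x : Fin (8 * n),
      ((φ x).val < 4 * n ↔ ((cE * cO) ((e * f) x)).val < 4 * n) := by
    intro x
    by_cases hx : x.val < 4 * n
    · have hef : (e * f) x = e x := by rw [Equiv.Perm.mul_apply, hffix' x hx]
      by_cases hφx : (φ x).val < 4 * n
      · have hnΦ : x ∉ Φ₁ := by
          simp only [hΦ₁, Finset.mem_filter, Finset.mem_univ, true_and, not_and, not_not]
          intro; exact hφx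
        have : e x ∉ K₁ := fun hc => hnΦ ((hemap x).1 hc)
        simp only [hK₁, Finset.mem_filter, Finset.mem_univ, true_and, not_and, not_not] at this
        rw [hef]
        exact iff_of_true hφx (this ((hepres x).2 hx))
      · have hΦ : x ∈ Φ₁ := by
          simp only [hΦ₁, Finset.mem_filter, Finset.mem_univ, true_and]
          exact ⟨hx, hφx⟩
        have hK : e x ∈ K₁ := (hemap x).2 hΦ
        simp only [hK₁, Finset.mem_filter, Finset.mem_univ, true_and] at hK
        rw [hef]
        exact iff_of_false hφx hK.2
    · have hfx : ¬ (f x).val < 4 * n := (hfpres x).2 hx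
      have hef : (e * f) x = f x := by rw [Equiv.Perm.mul_apply, hefix _ hfx]
      by_cases hφx : (φ x).val < 4 * n
      · have hΦ : x ∈ Φ₂ := by
          simp only [hΦ₂, Finset.mem_filter, Finset.mem_univ, true_and]
          exact ⟨hx, hφx⟩
        have hK : f x ∈ K₂ := (hfmap x).2 hΦ
        simp only [hK₂, Finset.mem_filter, Finset.mem_univ, true_and] at hK
        rw [hef]
        exact iff_of_true hφx hK.2
      · have hnΦ : x ∉ Φ₂ := by
          simp only [hΦ₂, Finset.mem_filter, Finset.mem_univ, true_and, not_and]
          intro; exact hφx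
        have : f x ∉ K₂ := fun hc => hnΦ ((hfmap x).1 hc)
        simp only [hK₂, Finset.mem_filter, Finset.mem_univ, true_and, not_and] at this
        rw [hef]
        exact iff_of_false hφx (this hfx)
  -- the left row permutation
  set h : Equiv.Perm (Fin (8 * n)) := φ * (e * f)⁻¹ * (cE * cO)⁻¹ with hh
  have Hrow : ∀ y : Fin (8 * n), ((h y).val < 4 * n ↔ y.val < 4 * n) := by
    intro y
    set x := (e * f)⁻¹ ((cE * cO)⁻¹ y) with hx
    have h1 : h y = φ x := by
      rw [hh]; simp [Equiv.Perm.mul_apply, hx]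
    have h2 : (cE * cO) ((e * f) x) = y := by
      rw [hx]; simp
    rw [h1, key x, h2]
  obtain ⟨a, b, hafix, hbfix, hab⟩ := perm_decomp h (fun x => x.val < 4 * n) Hrow
  refine ⟨a, b, cE, cO, e, f, hafix, hbfix, hcEfix, hcOfix', hefix, hffix', ?_⟩
  rw [← hab, hh]
  group

section Phase2

variable {α : Type*} [Fintype α] [DecidableEq α]

lemma comm_of_fix {g h : Equiv.Perm α} {p : α → Prop}
    (hg : ∀ x, p x → g x = x) (hh : ∀ x, ¬ p x → h x = x) : g * h = h * g :=
  (Equiv.Perm.Disjoint.commute (fun x =>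
    (em (p x)).elim (fun hx => Or.inl (hg x hx)) (fun hx => Or.inr (hh x hx)))).eq

/-- Correction permutation: a designated swap when the sign `t` is `-1`, else `1`. -/
def corr (t : ℤˣ) (u v : α) : Equiv.Perm α :=
  if t = 1 then 1 else Equiv.swap u v

lemma corr_fix (t : ℤˣ) (u v : α) {x : α} (hu : x ≠ u) (hv : x ≠ v) : corr t u v x = x := by
  unfold corr
  split
  · rfl
  · exact Equiv.swap_apply_of_ne_of_ne hu hv

lemma corr_invol (t : ℤˣ) (u v : α) : corr t u v * corr t u v = 1 := by
  unfold corr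
  split
  · simp
  · exact Equiv.swap_mul_self u v

lemma corr_sign (t : ℤˣ) {u v : α} (huv : u ≠ v) : Equiv.Perm.sign (corr t u v) = t := by
  unfold corr
  rcases Int.units_eq_one_or t with rfl | rfl
  · simp
  · rw [if_neg (by decide)]
    exact Equiv.Perm.sign_swap huv

lemma swapHead {G : Type*} [Group G] {x y : G} (h : x * y = y * x) (z : G) :
    x * (y * z) = y * (x * z) := by rw [← mul_assoc, h, mul_assoc]

lemma cancelPair {G : Type*} [Group G] {c : G} (h : c * c = 1) (z : G) :
    c * (c * z) = z := by rw [← mul_assoc, h, one_mul]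

/-- The abstract product rearrangement used to insert the five sign corrections. -/
lemma product_rearrange {G : Type*} [Group G] (a b cE cO e f c1 c2 c3 c4 c5 : G)
    (h11 : c1 * c1 = 1) (h22 : c2 * c2 = 1) (h33 : c3 * c3 = 1)
    (h44 : c4 * c4 = 1) (h55 : c5 * c5 = 1)
    (Hc1b : c1 * b = b * c1) (Hc1c2 : c1 * c2 = c2 * c1)
    (Hc2cE : cE * c2 = c2 * cE) (Hc2c3 : c3 * c2 = c2 * c3) (Hc2c4 : c4 * c2 = c2 * c4)
    (HcOc3 : c3 * cO = cO * c3) (HcOc4 : c4 * cO = cO * c4)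
    (Hc3e : c3 * e = e * c3) :
    ((a * c1) * (b * c2)) * ((((c1 * cE) * c3) * c4) * ((c2 * cO) * c5))
      * ((c5 * (c4 * e)) * (c3 * f)) = (a * b) * (cE * cO) * (e * f) := by
  simp only [mul_assoc]
  rw [cancelPair h55]
  rw [swapHead Hc2c4, swapHead Hc2c3, swapHead Hc2cE, swapHead Hc1c2, cancelPair h22]
  rw [swapHead Hc1b, cancelPair h11]
  rw [swapHead HcOc4, cancelPair h44, swapHead HcOc3, swapHead Hc3e, cancelPair h33]

end Phase2

set_option maxHeartbeats 1600000 in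
/-- Phase 2: the decomposition with all six pieces even. -/
lemma phase2 (n : ℕ) (hn : 1 ≤ n) (φ : Equiv.Perm (Fin (8 * n)))
    (hsign : Equiv.Perm.sign φ = 1) :
    ∃ a b cE cO e f : Equiv.Perm (Fin (8 * n)),
      (∀ x, ¬ x.val < 4 * n → a x = x) ∧ (∀ x, x.val < 4 * n → b x = x) ∧
      (∀ x, ¬ x.val % 2 = 0 → cE x = x) ∧ (∀ x, x.val % 2 = 0 → cO x = x) ∧
      (∀ x, ¬ x.val < 4 * n → e x = x) ∧ (∀ x, x.val < 4 * n → f x = x) ∧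
      Equiv.Perm.sign a = 1 ∧ Equiv.Perm.sign b = 1 ∧ Equiv.Perm.sign cE = 1 ∧
      Equiv.Perm.sign cO = 1 ∧ Equiv.Perm.sign e = 1 ∧ Equiv.Perm.sign f = 1 ∧
      φ = (a * b) * (cE * cO) * (e * f) := by
  classical
  obtain ⟨a, b, cE, cO, e, f, ha, hb, hcE, hcO, he, hf, hprod⟩ := phase1 n φ
  -- designated points in the four blocks
  have h8 : 8 ≤ 8 * n := by omega
  obtain ⟨xA0, hxA0v⟩ : ∃ x : Fin (8 * n), x.val = 0 := ⟨⟨0, by omega⟩, rfl⟩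
  obtain ⟨xA2, hxA2v⟩ : ∃ x : Fin (8 * n), x.val = 2 := ⟨⟨2, by omega⟩, rfl⟩
  obtain ⟨xB1, hxB1v⟩ : ∃ x : Fin (8 * n), x.val = 1 := ⟨⟨1, by omega⟩, rfl⟩
  obtain ⟨xB3, hxB3v⟩ : ∃ x : Fin (8 * n), x.val = 3 := ⟨⟨3, by omega⟩, rfl⟩
  obtain ⟨xC0, hxC0v⟩ : ∃ x : Fin (8 * n), x.val = 4 * n := ⟨⟨4 * n, by omega⟩, rfl⟩
  obtain ⟨xC2, hxC2v⟩ : ∃ x : Fin (8 * n), x.val = 4 * n + 2 := ⟨⟨4 * n + 2, by omega⟩, rfl⟩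
  obtain ⟨xD1, hxD1v⟩ : ∃ x : Fin (8 * n), x.val = 4 * n + 1 := ⟨⟨4 * n + 1, by omega⟩, rfl⟩
  obtain ⟨xD3, hxD3v⟩ : ∃ x : Fin (8 * n), x.val = 4 * n + 3 := ⟨⟨4 * n + 3, by omega⟩, rfl⟩
  have hneA : xA0 ≠ xA2 := fun h => by rw [Fin.ext_iff, hxA0v, hxA2v] at h; omega
  have hneB : xB1 ≠ xB3 := fun h => by rw [Fin.ext_iff, hxB1v, hxB3v] at h; omega
  have hneC : xC0 ≠ xC2 := fun h => by rw [Fin.ext_iff, hxC0v, hxC2v] at h; omega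
  have hneD : xD1 ≠ xD3 := fun h => by rw [Fin.ext_iff, hxD1v, hxD3v] at h; omega
  have fixA : ∀ t : ℤˣ, ∀ x : Fin (8 * n),
      (¬ x.val < 4 * n ∨ ¬ x.val % 2 = 0) → corr t xA0 xA2 x = x := by
    intro t x hx
    refine corr_fix t _ _ (fun h => ?_) (fun h => ?_) <;>
      (have hv := congrArg Fin.val h) <;>
      [rw [hxA0v] at hv; rw [hxA2v] at hv] <;>
      rcases hx with hx | hx <;> omega
  have fixB : ∀ t : ℤˣ, ∀ x : Fin (8 * n),
      (¬ x.val < 4 * n ∨ x.val % 2 = 0) → corr t xB1 xB3 x = x := by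
    intro t x hx
    refine corr_fix t _ _ (fun h => ?_) (fun h => ?_) <;>
      (have hv := congrArg Fin.val h) <;>
      [rw [hxB1v] at hv; rw [hxB3v] at hv] <;>
      rcases hx with hx | hx <;> omega
  have fixC : ∀ t : ℤˣ, ∀ x : Fin (8 * n),
      (x.val < 4 * n ∨ ¬ x.val % 2 = 0) → corr t xC0 xC2 x = x := by
    intro t x hx
    refine corr_fix t _ _ (fun h => ?_) (fun h => ?_) <;>
      (have hv := congrArg Fin.val h) <;>
      [rw [hxC0v] at hv; rw [hxC2v] at hv] <;>
      rcases hx with hx | hx <;> omega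
  have fixD : ∀ t : ℤˣ, ∀ x : Fin (8 * n),
      (x.val < 4 * n ∨ x.val % 2 = 0) → corr t xD1 xD3 x = x := by
    intro t x hx
    refine corr_fix t _ _ (fun h => ?_) (fun h => ?_) <;>
      (have hv := congrArg Fin.val h) <;>
      [rw [hxD1v] at hv; rw [hxD3v] at hv] <;>
      rcases hx with hx | hx <;> omega
  set c1 := corr (Equiv.Perm.sign a) xA0 xA2 with hc1
  set c2 := corr (Equiv.Perm.sign b) xD1 xD3 with hc2
  set c3 := corr (Equiv.Perm.sign f) xC0 xC2 with hc3
  set cE2 := (c1 * cE) * c3 with hcE2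
  set c4 := corr (Equiv.Perm.sign cE2) xA0 xA2 with hc4
  set c5 := corr (Equiv.Perm.sign (c2 * cO)) xB1 xB3 with hc5
  -- involutions
  have h11 : c1 * c1 = 1 := by rw [hc1]; exact corr_invol _ _ _
  have h22 : c2 * c2 = 1 := by rw [hc2]; exact corr_invol _ _ _
  have h33 : c3 * c3 = 1 := by rw [hc3]; exact corr_invol _ _ _
  have h44 : c4 * c4 = 1 := by rw [hc4]; exact corr_invol _ _ _
  have h55 : c5 * c5 = 1 := by rw [hc5]; exact corr_invol _ _ _
  -- commutation facts
  have Hc1b : c1 * b = b * c1 :=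
    comm_of_fix (p := fun x : Fin (8 * n) => ¬ x.val < 4 * n)
      (fun x hx => fixA _ x (Or.inl hx)) (fun x hx => hb x (not_not.1 hx))
  have Hc1c2 : c1 * c2 = c2 * c1 :=
    comm_of_fix (p := fun x : Fin (8 * n) => ¬ x.val < 4 * n)
      (fun x hx => fixA _ x (Or.inl hx)) (fun x hx => fixD _ x (Or.inl (not_not.1 hx)))
  have Hc2cE : cE * c2 = c2 * cE :=
    comm_of_fix (p := fun x : Fin (8 * n) => ¬ x.val % 2 = 0)
      (fun x hx => hcE x hx) (fun x hx => fixD _ x (Or.inr (not_not.1 hx)))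
  have Hc2c3 : c3 * c2 = c2 * c3 :=
    comm_of_fix (p := fun x : Fin (8 * n) => ¬ x.val % 2 = 0)
      (fun x hx => fixC _ x (Or.inr hx)) (fun x hx => fixD _ x (Or.inr (not_not.1 hx)))
  have Hc2c4 : c4 * c2 = c2 * c4 :=
    comm_of_fix (p := fun x : Fin (8 * n) => ¬ x.val < 4 * n)
      (fun x hx => fixA _ x (Or.inl hx)) (fun x hx => fixD _ x (Or.inl (not_not.1 hx)))
  have HcOc3 : c3 * cO = cO * c3 :=
    comm_of_fix (p := fun x : Fin (8 * n) => ¬ x.val % 2 = 0)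
      (fun x hx => fixC _ x (Or.inr hx)) (fun x hx => hcO x (not_not.1 hx))
  have HcOc4 : c4 * cO = cO * c4 :=
    comm_of_fix (p := fun x : Fin (8 * n) => ¬ x.val % 2 = 0)
      (fun x hx => fixA _ x (Or.inr hx)) (fun x hx => hcO x (not_not.1 hx))
  have Hc3e : c3 * e = e * c3 :=
    comm_of_fix (p := fun x : Fin (8 * n) => x.val < 4 * n)
      (fun x hx => fixC _ x (Or.inl hx)) (fun x hx => he x hx)
  -- the rearranged product
  have hprod2 : φ = ((a * c1) * (b * c2)) * ((cE2 * c4) * (((c2 * cO)) * c5))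
      * ((c5 * (c4 * e)) * (c3 * f)) := by
    rw [hprod, hcE2]
    exact (product_rearrange a b cE cO e f c1 c2 c3 c4 c5 h11 h22 h33 h44 h55
      Hc1b Hc1c2 Hc2cE Hc2c3 Hc2c4 HcOc3 HcOc4 Hc3e).symm
  -- signs
  have hs1 : Equiv.Perm.sign (a * c1) = 1 := by
    rw [map_mul, hc1, corr_sign _ hneA, Int.units_mul_self]
  have hs2 : Equiv.Perm.sign (b * c2) = 1 := by
    rw [map_mul, hc2, corr_sign _ hneD, Int.units_mul_self]
  have hs3 : Equiv.Perm.sign (cE2 * c4) = 1 := by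
    rw [map_mul, hc4, corr_sign _ hneA, Int.units_mul_self]
  have hs4 : Equiv.Perm.sign ((c2 * cO) * c5) = 1 := by
    rw [map_mul, hc5, corr_sign _ hneB, Int.units_mul_self]
  have hs6 : Equiv.Perm.sign (c3 * f) = 1 := by
    rw [map_mul, hc3, corr_sign _ hneC]
    exact mul_comm (Equiv.Perm.sign f) _ ▸ Int.units_mul_self _
  have hs5 : Equiv.Perm.sign (c5 * (c4 * e)) = 1 := by
    have t1 : Equiv.Perm.sign ((a * c1) * (b * c2)) = 1 := by
      rw [map_mul, hs1, hs2, one_mul]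
    have t3 : Equiv.Perm.sign ((a * c1) * (b * c2) * ((cE2 * c4) * (((c2 * cO)) * c5))) = 1 := by
      rw [map_mul, t1, one_mul, map_mul, hs3, hs4, one_mul]
    have h := congrArg Equiv.Perm.sign hprod2
    rw [hsign, map_mul, t3, one_mul, map_mul, hs6, mul_one] at h
    exact h.symm
  have SA : ∀ x : Fin (8 * n), ¬ x.val < 4 * n → (a * c1) x = x := by
    intro x hx
    rw [Equiv.Perm.mul_apply, fixA _ x (Or.inl hx), ha x hx]
  have SB : ∀ x : Fin (8 * n), x.val < 4 * n → (b * c2) x = x := by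
    intro x hx
    rw [Equiv.Perm.mul_apply, fixD _ x (Or.inl hx), hb x hx]
  have SCE : ∀ x : Fin (8 * n), ¬ x.val % 2 = 0 → (cE2 * c4) x = x := by
    intro x hx
    rw [Equiv.Perm.mul_apply, fixA _ x (Or.inr hx), hcE2, Equiv.Perm.mul_apply,
        Equiv.Perm.mul_apply, fixC _ x (Or.inr hx), hcE x hx, fixA _ x (Or.inr hx)]
  have SCO : ∀ x : Fin (8 * n), x.val % 2 = 0 → ((c2 * cO) * c5) x = x := by
    intro x hx
    rw [Equiv.Perm.mul_apply, fixB _ x (Or.inr hx), Equiv.Perm.mul_apply, hcO x hx,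
        fixD _ x (Or.inr hx)]
  have SE : ∀ x : Fin (8 * n), ¬ x.val < 4 * n → (c5 * (c4 * e)) x = x := by
    intro x hx
    rw [Equiv.Perm.mul_apply, Equiv.Perm.mul_apply, he x hx, fixA _ x (Or.inl hx),
        fixB _ x (Or.inl hx)]
  have SF : ∀ x : Fin (8 * n), x.val < 4 * n → (c3 * f) x = x := by
    intro x hx
    rw [Equiv.Perm.mul_apply, hf x hx, fixC _ x (Or.inl hx)]
  exact ⟨a * c1, b * c2, cE2 * c4, (c2 * cO) * c5, c5 * (c4 * e), c3 * f,
    SA, SB, SCE, SCO, SE, SF, hs1, hs2, hs3, hs4, hs5, hs6, hprod2⟩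

/-- Membership in `Γ = Alt(Δ₀) × Alt(Δ₁) ≤ Alt(8n)`, where (in 0-indexed form)
`Δ₀ = {0, …, 4n-1}` and `Δ₁ = {4n, …, 8n-1}`: `ψ = α * β` where `α` is an even
permutation supported on `Δ₀` and `β` is an even permutation supported on `Δ₁`. -/
def GammaMem (n : ℕ) (ψ : Equiv.Perm (Fin (8 * n))) : Prop :=
  ∃ α β : Equiv.Perm (Fin (8 * n)),
    α ∈ alternatingGroup (Fin (8 * n)) ∧ (∀ x : Fin (8 * n), 4 * n ≤ (x : ℕ) → α x = x) ∧
    β ∈ alternatingGroup (Fin (8 * n)) ∧ (∀ x : Fin (8 * n), (x : ℕ) < 4 * n → β x = x) ∧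
    ψ = α * β

lemma gammaMem_one (n : ℕ) : GammaMem n 1 :=
  ⟨1, 1, by simp [Equiv.Perm.mem_alternatingGroup], fun _ _ => rfl,
    by simp [Equiv.Perm.mem_alternatingGroup], fun _ _ => rfl, (one_mul 1).symm⟩

/-- Let `m = 8n` with `n ≥ 1`, and let `θ` be any involution of `{0, …, 8n-1}` mapping
`Δ₀ = {0, …, 4n-1}` onto the points corresponding to even numbers of `{1, …, 8n}`
(i.e. odd indices) and `Δ₁` onto those corresponding to odd numbers (even indices).
Then every `φ ∈ Alt(m)` is `ψ₁ θ ψ₂ θ ψ₃ θ ψ₄ θ ψ₅ θ ψ₆ θ ψ₇ θ ψ₈ θ ψ₉` with all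
`ψᵢ ∈ Γ = Alt(Δ₀) × Alt(Δ₁)`. -/
theorem stmt_10 (n : ℕ) (hn : 1 ≤ n)
    (θ : Equiv.Perm (Fin (8 * n))) (hθ1 : θ ^ 2 = 1)
    (hθ2 : ∀ x : Fin (8 * n), (x : ℕ) < 4 * n ↔ (θ x : ℕ) % 2 = 1)
    (φ : Equiv.Perm (Fin (8 * n))) (hφ : φ ∈ alternatingGroup (Fin (8 * n))) :
    ∃ ψ₁ ψ₂ ψ₃ ψ₄ ψ₅ ψ₆ ψ₇ ψ₈ ψ₉ : Equiv.Perm (Fin (8 * n)),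
      GammaMem n ψ₁ ∧ GammaMem n ψ₂ ∧ GammaMem n ψ₃ ∧ GammaMem n ψ₄ ∧ GammaMem n ψ₅ ∧
      GammaMem n ψ₆ ∧ GammaMem n ψ₇ ∧ GammaMem n ψ₈ ∧ GammaMem n ψ₉ ∧
      φ = ψ₁ * θ * ψ₂ * θ * ψ₃ * θ * ψ₄ * θ * ψ₅ * θ * ψ₆ * θ * ψ₇ * θ * ψ₈ * θ * ψ₉ := by
  classical
  have hsign : Equiv.Perm.sign φ = 1 := Equiv.Perm.mem_alternatingGroup.1 hφ
  obtain ⟨a, b, cE, cO, e, f, Sa, Sb, ScE, ScO, Se, Sf, sa, sb, scE, scO, se, sf, hprod⟩ :=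
    phase2 n hn φ hsign
  have hθθ : θ * θ = 1 := by rw [← sq]; exact hθ1
  have hθpt : ∀ x, θ (θ x) = x := fun x => by
    rw [← Equiv.Perm.mul_apply, hθθ]; rfl
  -- ψ₂ = θ (cE cO) θ lies in Γ
  have g2 : GammaMem n (θ * (cE * cO) * θ) := by
    refine ⟨θ * cO * θ, θ * cE * θ, ?_, ?_, ?_, ?_, ?_⟩
    · rw [Equiv.Perm.mem_alternatingGroup, map_mul, map_mul, scO, mul_one]
      exact Int.units_mul_self _
    · intro x hx
      have h1 : ¬ (x : ℕ) < 4 * n := by omega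
      have h2 : ((θ x : Fin (8 * n)) : ℕ) % 2 = 0 := by
        have := hθ2 x
        omega
      rw [Equiv.Perm.mul_apply, Equiv.Perm.mul_apply, ScO _ h2, hθpt]
    · rw [Equiv.Perm.mem_alternatingGroup, map_mul, map_mul, scE, mul_one]
      exact Int.units_mul_self _
    · intro x hx
      have h2 : ¬ ((θ x : Fin (8 * n)) : ℕ) % 2 = 0 := by
        have := (hθ2 x).1 hx
        omega
      rw [Equiv.Perm.mul_apply, Equiv.Perm.mul_apply, ScE _ h2, hθpt]
    · ext x
      simp only [Equiv.Perm.mul_apply, hθpt]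
      have hcomm : ∀ y, cE (cO y) = cO (cE y) := by
        intro y
        have h := comm_of_fix (p := fun x : Fin (8 * n) => ¬ x.val % 2 = 0)
          (fun x hx => ScE x hx) (fun x hx => ScO x (not_not.1 hx))
        rw [← Equiv.Perm.mul_apply, h, Equiv.Perm.mul_apply]
      rw [hcomm]
  refine ⟨a * b, θ * (cE * cO) * θ, e * f, 1, 1, 1, 1, 1, 1,
    ⟨a, b, Equiv.Perm.mem_alternatingGroup.2 sa, fun x hx => Sa x (by omega),
      Equiv.Perm.mem_alternatingGroup.2 sb, Sb, rfl⟩,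
    g2,
    ⟨e, f, Equiv.Perm.mem_alternatingGroup.2 se, fun x hx => Se x (by omega),
      Equiv.Perm.mem_alternatingGroup.2 sf, Sf, rfl⟩,
    gammaMem_one n, gammaMem_one n, gammaMem_one n, gammaMem_one n, gammaMem_one n,
    gammaMem_one n, ?_⟩
  rw [hprod]
  ext x
  simp only [Equiv.Perm.mul_apply, Equiv.Perm.one_apply, hθpt]
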